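/- Assume the lattice is minimal and elliptic, the dual graph is connected, Z_K ∈ L (numerically Gorenstein), and the lattice admits an elliptic sequence (s = 0; B_0 = V, B_1, …, B_m; Z_{B_0},…,Z_{B_m}) with C_t = ∑_{i=0}^{t} Z_{B_i}. If Z ∈ L satisfies Z > 0 and (Z, E_v) = (E_v,E_v)+2 for every v ∈ |Z| (its support carries a numerically Gorenstein subgraph with canonical cycle Z), then |Z| = B_i for some 0 ≤ i ≤ m, and moreover Z = Z_K − C_{i−1} (where C_{−1} = 0). -/

import Mathlib

open scoped BigOperators

/-- A negative definite lattice on the free ℤ-module with basis indexed by `V`,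
realized inside the ℚ-vector space `V → ℚ`.  The basis vector `E_v` is `Pi.single v 1`,
the symmetric bilinear form `B` takes integer values on basis vectors, is negative
definite, and has nonnegative off-diagonal entries. -/
structure LatticeData (V : Type*) [Fintype V] [DecidableEq V] where
  B : (V → ℚ) →ₗ[ℚ] (V → ℚ) →ₗ[ℚ] ℚ
  symm : ∀ x y, B x y = B y x
  int_basis : ∀ u v : V, ∃ n : ℤ, B (Pi.single u 1) (Pi.single v 1) = (n : ℚ)
  negdef : ∀ x : V → ℚ, x ≠ 0 → B x x < 0
  offdiag : ∀ u v : V, u ≠ v → (0 : ℚ) ≤ B (Pi.single u 1) (Pi.single v 1)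

variable {V : Type*} [Fintype V] [DecidableEq V]

/-- The basis vector `E_v`. -/
def Ev (v : V) : V → ℚ := Pi.single v 1

/-- `x` lies in the lattice `L` (has integral coefficients). -/
def inL (x : V → ℚ) : Prop := ∀ v, ∃ n : ℤ, x v = (n : ℚ)

/-- The support `|x|` of a cycle. -/
def supp (x : V → ℚ) : Set V := {v | x v ≠ 0}

/-- `x ∈ L'`, the dual lattice: all pairings with basis vectors are integers. -/
def inLd (D : LatticeData V) (x : V → ℚ) : Prop := ∀ v, ∃ n : ℤ, D.B x (Ev v) = (n : ℚ)

/-- `x ∈ S'`: the antinef cone of the dual lattice. -/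
def inS' (D : LatticeData V) (x : V → ℚ) : Prop := inLd D x ∧ ∀ v, D.B x (Ev v) ≤ 0

/-- The Riemann–Roch expression `χ(x) = -(x, x - Z_K)/2`. -/
def chi (D : LatticeData V) (ZK x : V → ℚ) : ℚ := -(D.B x (x - ZK)) / 2

/-- `ZK` is the (anti)canonical cycle: `(Z_K, E_v) = (E_v,E_v) + 2` for all `v`. -/
def IsCanonical (D : LatticeData V) (ZK : V → ℚ) : Prop :=
  ∀ v, D.B ZK (Ev v) = D.B (Ev v) (Ev v) + 2

/-- The lattice is minimal: all self-intersections are at most `-2`. -/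
def IsMinimal (D : LatticeData V) : Prop := ∀ v : V, D.B (Ev v) (Ev v) ≤ -2

/-- The lattice is elliptic: `χ(l) ≥ 0` for all `l ∈ L`, `l > 0`, with value 0 attained. -/
def Elliptic (D : LatticeData V) (ZK : V → ℚ) : Prop :=
  (∀ l : V → ℚ, inL l → 0 ≤ l → l ≠ 0 → 0 ≤ chi D ZK l) ∧
  (∃ l : V → ℚ, inL l ∧ 0 ≤ l ∧ l ≠ 0 ∧ chi D ZK l = 0)

/-- The dual graph: `u ≠ v` are adjacent iff `(E_u, E_v) > 0`. -/
def dualGraph (D : LatticeData V) : SimpleGraph V where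
  Adj u v := u ≠ v ∧ 0 < D.B (Ev u) (Ev v)
  symm := by
    constructor
    intro u v h
    exact ⟨h.1.symm, by rw [D.symm]; exact h.2⟩
  loopless := by
    constructor
    intro u h
    exact h.1 rfl


section AuxLemmas

lemma sum_single_eq (x : V → ℚ) : ∑ v, x v • Ev v = x := by
  funext u
  rw [Finset.sum_apply]
  simp [Ev, Pi.single_apply]

lemma B_exp_right (D : LatticeData V) (x y : V → ℚ) :
    D.B x y = ∑ v, y v * D.B x (Ev v) := by
  conv_lhs => rw [← sum_single_eq y]
  rw [map_sum]
  simp [smul_eq_mul]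

lemma B_exp_left (D : LatticeData V) (x y : V → ℚ) :
    D.B x y = ∑ v, x v * D.B (Ev v) y := by
  rw [D.symm, B_exp_right]
  exact Finset.sum_congr rfl fun v _ => by rw [D.symm]

lemma chi_add (D : LatticeData V) (ZK x y : V → ℚ) :
    chi D ZK (x + y) = chi D ZK x + chi D ZK y - D.B x y := by
  have h := D.symm x y
  simp only [chi, map_add, map_sub, LinearMap.add_apply, LinearMap.sub_apply]
  ring_nf
  linear_combination h / 2

lemma B_nonneg_of_zero (D : LatticeData V) (x : V → ℚ) (hx : 0 ≤ x) (v : V) (hv : x v = 0) :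
    0 ≤ D.B x (Ev v) := by
  rw [B_exp_left]
  apply Finset.sum_nonneg
  intro u _
  rcases eq_or_ne u v with rfl | h
  · rw [hv, zero_mul]
  · exact mul_nonneg (hx u) (D.offdiag u v h)

lemma nonneg_of_orth (D : LatticeData V) (W : V → ℚ)
    (h : ∀ v, W v < 0 → D.B W (Ev v) = 0) : 0 ≤ W := by
  by_contra hW
  set N : V → ℚ := fun v => max (-W v) 0 with hN
  set P : V → ℚ := fun v => max (W v) 0 with hP
  have hPN : ∀ v, W v = P v - N v := by
    intro v
    rcases le_total 0 (W v) with hv | hv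
    · simp [hP, hN, max_eq_left, hv, neg_nonpos_of_nonneg hv]
    · simp [hP, hN, max_eq_right, hv, neg_nonneg.mpr hv]
  have hWPN : W = P - N := funext fun v => by rw [Pi.sub_apply]; exact hPN v
  have hNne : N ≠ 0 := by
    rw [Pi.le_def] at hW
    push_neg at hW
    obtain ⟨v, hv⟩ := hW
    have hv : W v < 0 := by simpa using hv
    intro h0
    have : N v = 0 := by rw [h0]; rfl
    have : max (-W v) 0 = 0 := this
    have h1 : -W v ≤ 0 := by
      by_contra hc
      push_neg at hc
      rw [max_eq_left hc.le] at this
      linarith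
    linarith
  have hNW : D.B N W = 0 := by
    rw [B_exp_left]
    apply Finset.sum_eq_zero
    intro v _
    rcases eq_or_ne (N v) 0 with h0 | h0
    · rw [h0, zero_mul]
    · have hv : W v < 0 := by
        by_contra hc
        push_neg at hc
        have : N v = 0 := by simp [hN, max_eq_right, neg_nonpos_of_nonneg hc]
        exact h0 this
      rw [D.symm, h v hv, mul_zero]
  have hNP : 0 ≤ D.B N P := by
    rw [B_exp_left]
    apply Finset.sum_nonneg
    intro u _
    rcases eq_or_ne (N u) 0 with h0 | h0
    · rw [h0, zero_mul]
    · apply mul_nonneg (le_max_right _ _)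
      rw [B_exp_right]
      apply Finset.sum_nonneg
      intro v _
      rcases eq_or_ne (P v) 0 with h1 | h1
      · rw [h1, zero_mul]
      · have huv : u ≠ v := by
          intro rfl'
          subst rfl'
          have hWu : W u < 0 := by
            rcases lt_or_ge (W u) 0 with h | h
            · exact h
            · exact absurd (by simp [hN, max_eq_right, neg_nonpos_of_nonneg h]) h0
          have : P u = 0 := by simp [hP, max_eq_right, hWu.le]
          exact h1 this
        exact mul_nonneg (le_max_right _ _) (D.offdiag u v huv)
  have hNN : 0 ≤ D.B N N := by
    have : D.B N N = D.B N P - D.B N W := by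
      rw [hWPN]
      simp only [map_sub]
      ring
    rw [this, hNW, sub_zero]
    exact hNP
  exact absurd hNN (not_le.mpr (D.negdef N hNne))

lemma inL_sub {x y : V → ℚ} (hx : inL x) (hy : inL y) : inL (x - y) := by
  intro v
  obtain ⟨n, hn⟩ := hx v
  obtain ⟨k, hk⟩ := hy v
  exact ⟨n - k, by rw [Pi.sub_apply, hn, hk]; push_cast; ring⟩

lemma inL_sum {s : Finset ℕ} {f : ℕ → V → ℚ} (h : ∀ i ∈ s, inL (f i)) :
    inL (∑ i ∈ s, f i) := by
  refine Finset.sum_induction f inL (fun a b ha hb v => ?_) (fun v => ⟨0, by simp⟩) h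
  obtain ⟨n, hn⟩ := ha v
  obtain ⟨k, hk⟩ := hb v
  exact ⟨n + k, by rw [Pi.add_apply, hn, hk]; push_cast; ring⟩

lemma exists_boundary {α : Type*} {G : SimpleGraph α} {P : α → Prop} :
    ∀ {a b : α}, G.Walk a b → P a → ¬ P b → ∃ u v, G.Adj u v ∧ P u ∧ ¬ P v := by
  intro a b w
  induction w with
  | nil => intro h h'; exact absurd h h'
  | @cons u c d h p ih =>
    intro ha hb
    by_cases hc : P c
    · exact ih hc hb
    · exact ⟨u, c, h, ha, hc⟩

lemma suppZK_full (D : LatticeData V) (ZK : V → ℚ)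
    (hZK : IsCanonical D ZK) (hmin : IsMinimal D) (hconn : (dualGraph D).Connected)
    (h0 : 0 ≤ ZK) (hne : ZK ≠ 0) (v : V) : ZK v ≠ 0 := by
  intro hv
  obtain ⟨a, ha⟩ := Function.ne_iff.mp hne
  have ha : ZK a ≠ 0 := by simpa using ha
  obtain ⟨w⟩ := hconn.preconnected a v
  obtain ⟨u, b, hadj, hu, hb⟩ :=
    exists_boundary (P := fun x => ZK x ≠ 0) w ha (by simpa using hv)
  push_neg at hb
  have hpos : 0 < D.B ZK (Ev b) := by
    rw [B_exp_left]
    apply Finset.sum_pos'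
    · intro w' _
      rcases eq_or_ne w' b with rfl | hwb
      · rw [hb, zero_mul]
      · exact mul_nonneg (h0 w') (D.offdiag w' b hwb)
    · exact ⟨u, Finset.mem_univ u,
        mul_pos (lt_of_le_of_ne (h0 u) (Ne.symm hu)) hadj.2⟩
  have h1 := hZK b
  have h2 := hmin b
  linarith

end AuxLemmas
theorem test_preamble : True := trivial

/-- An elliptic sequence `(s; B_0 ⊇ ⋯ ⊇ B_m; Z_{B_0}, …, Z_{B_m})` for the lattice,
following the conventions of the paper: `s` is the minimal antinef representative
of the class of `Z_K` (`s = 0` when `Z_K ∈ L`), `Bset j` is the support `B_j`,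
and `Z j` is the fundamental cycle `Z_{B_j}` of `B_j` (for `0 ≤ j ≤ m`). -/
structure EllSeq (D : LatticeData V) (ZK : V → ℚ) where
  s : V → ℚ
  m : ℕ
  Bset : ℕ → Set V
  Z : ℕ → (V → ℚ)
  hs_S' : inS' D s
  hs_int : inL (ZK - s)
  hs_min : ∀ t : V → ℚ, inS' D t → inL (ZK - t) → s ≤ t
  hB0_not : ¬ inL ZK → Bset 0 = supp (ZK - s)
  hB0_in : inL ZK → Bset 0 = Set.univ
  hmono : ∀ j, j < m → Bset (j + 1) ⊆ Bset j
  hZ_int : ∀ j, j ≤ m → inL (Z j)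
  hZ_pos : ∀ j, j ≤ m → 0 ≤ Z j ∧ Z j ≠ 0
  hZ_supp : ∀ j, j ≤ m → supp (Z j) ⊆ Bset j
  hZ_anti : ∀ j, j ≤ m → ∀ u ∈ Bset j, D.B (Z j) (Ev u) ≤ 0
  hZ_min : ∀ j, j ≤ m → ∀ x : V → ℚ, inL x → 0 ≤ x → x ≠ 0 → supp x ⊆ Bset j →
      (∀ u ∈ Bset j, D.B x (Ev u) ≤ 0) → Z j ≤ x
  hBnext : ∀ j, j < m → Bset (j + 1) = supp (ZK - s - ∑ i ∈ Finset.range (j + 1), Z i)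
  hsum : ZK = s + ∑ i ∈ Finset.range (m + 1), Z i

/-- for a minimal elliptic numerically Gorenstein lattice with connected
dual graph, admitting an elliptic sequence with `s = 0` (so `B_0 = V`): if `Z ∈ L`,
`Z > 0` and `(Z, E_v) = (E_v,E_v) + 2` for all `v ∈ |Z|`, then `|Z| = B_i` for some
`0 ≤ i ≤ m`, and `Z = Z_K - C_{i-1}` where `C_{i-1} = s + ∑_{k < i} Z_{B_k}`. -/
theorem statement6 {V : Type*} [Fintype V] [DecidableEq V] [Nonempty V]
    (D : LatticeData V) (ZK : V → ℚ) (hZK : IsCanonical D ZK)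
    (hmin : IsMinimal D) (hell : Elliptic D ZK)
    (hconn : (dualGraph D).Connected)
    (hZKL : inL ZK)
    (seq : EllSeq D ZK) (hs0 : seq.s = 0)
    (Z : V → ℚ) (hZL : inL Z) (hZ0 : 0 ≤ Z) (hZne : Z ≠ 0)
    (hcan : ∀ v ∈ supp Z, D.B Z (Ev v) = D.B (Ev v) (Ev v) + 2) :
    ∃ i ≤ seq.m, supp Z = seq.Bset i ∧
      Z = ZK - (seq.s + ∑ k ∈ Finset.range i, seq.Z k) := by
  classical
  obtain ⟨hell1, -⟩ := hell
  set m := seq.m with hm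
  set C : ℕ → V → ℚ := fun j => ∑ i ∈ Finset.range j, seq.Z i with hCdef
  have hC0 : C 0 = 0 := by simp [hCdef]
  have hCsucc : ∀ j, C (j + 1) = C j + seq.Z j := fun j => Finset.sum_range_succ _ j
  have hZKsum : ZK = ∑ i ∈ Finset.range (m + 1), seq.Z i := by
    have h := seq.hsum; rw [hs0, zero_add] at h; exact h
  have hD_Ico : ∀ j, j ≤ m + 1 → ZK - C j = ∑ i ∈ Finset.Ico j (m + 1), seq.Z i := by
    intro j hj
    have h := Finset.sum_Ico_consecutive (fun i => seq.Z i) (Nat.zero_le j) hj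
    rw [sub_eq_iff_eq_add']
    have hCj : C j = ∑ i ∈ Finset.Ico 0 j, seq.Z i := by
      rw [← Finset.range_eq_Ico]
    calc ZK = ∑ i ∈ Finset.Ico 0 (m + 1), seq.Z i := by
              rw [Finset.range_eq_Ico] at hZKsum; exact hZKsum
      _ = ∑ i ∈ Finset.Ico 0 j, seq.Z i + ∑ i ∈ Finset.Ico j (m + 1), seq.Z i :=
              h.symm
      _ = C j + ∑ i ∈ Finset.Ico j (m + 1), seq.Z i := by rw [hCj]
  have hDpos : ∀ j, j ≤ m → 0 ≤ ZK - C j := by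
    intro j hj
    rw [hD_Ico j (le_trans hj (Nat.le_succ m))]
    exact Finset.sum_nonneg fun i hi =>
      (seq.hZ_pos i (by have := (Finset.mem_Ico.mp hi).2; omega)).1
  have hDgeZ : ∀ j, j ≤ m → seq.Z j ≤ ZK - C j := by
    intro j hj
    rw [hD_Ico j (le_trans hj (Nat.le_succ m))]
    exact Finset.single_le_sum
      (f := fun i => seq.Z i)
      (fun i hi => (seq.hZ_pos i (by have := (Finset.mem_Ico.mp hi).2; omega)).1)
      (Finset.mem_Ico.mpr ⟨le_refl j, Nat.lt_succ_of_le hj⟩)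
  have hZex : ∀ j, j ≤ m → ∃ v, 0 < seq.Z j v := by
    intro j hj
    obtain ⟨h0, hne⟩ := seq.hZ_pos j hj
    obtain ⟨v, hv⟩ := Function.ne_iff.mp hne
    exact ⟨v, lt_of_le_of_ne (h0 v) (by simpa using Ne.symm hv)⟩
  have hDne : ∀ j, j ≤ m → ZK - C j ≠ 0 := by
    intro j hj h0
    obtain ⟨v, hv⟩ := hZex j hj
    have h1 : seq.Z j v ≤ (ZK - C j) v := hDgeZ j hj v
    rw [h0] at h1
    simp only [Pi.zero_apply] at h1
    linarith
  have hDint : ∀ j, j ≤ m + 1 → inL (ZK - C j) := by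
    intro j hj
    exact inL_sub hZKL (inL_sum fun i hi =>
      seq.hZ_int i (by have := Finset.mem_range.mp hi; omega))
  have hB0 : seq.Bset 0 = Set.univ := seq.hB0_in hZKL
  have hBsupp : ∀ j, 1 ≤ j → j ≤ m → seq.Bset j = supp (ZK - C j) := by
    intro j h1 hj
    match j, h1 with
    | k + 1, _ =>
      have h := seq.hBnext k hj
      rw [hs0, sub_zero] at h
      exact h
  have hDsupp : ∀ j, j ≤ m → supp (ZK - C j) ⊆ seq.Bset j := by
    intro j hj
    match j with
    | 0 => rw [hB0]; exact Set.subset_univ _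
    | k + 1 => rw [hBsupp (k + 1) (Nat.succ_le_succ (Nat.zero_le k)) hj]
  -- Key Lemma: (C j, E_v) = 0 for all v ∈ B_j
  have L1 : ∀ j, j ≤ m → ∀ v ∈ seq.Bset j, D.B (C j) (Ev v) = 0 := by
    intro j
    induction j with
    | zero => intro _ v _; rw [hC0]; simp
    | succ k ih =>
      intro hk v hv
      have hkm : k < m := hk
      have hkle : k ≤ m := le_of_lt hkm
      have ihk := ih hkle
      have horth : D.B (ZK - C k) (C k) = 0 := by
        rw [D.symm, B_exp_right]
        apply Finset.sum_eq_zero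
        intro u _
        rcases eq_or_ne ((ZK - C k) u) 0 with h | h
        · rw [h, zero_mul]
        · rw [ihk u (hDsupp k hkle h), mul_zero]
      have hchiDk : chi D ZK (ZK - C k) = 0 := by
        have h1 : ZK - C k - ZK = -(C k) := by ring
        simp only [chi, h1, map_neg, horth]
        ring
      have hdec : ZK - C k = seq.Z k + (ZK - C (k + 1)) := by
        rw [hCsucc k]; ring
      have h1 : 0 ≤ chi D ZK (seq.Z k) :=
        hell1 _ (seq.hZ_int k hkle) (seq.hZ_pos k hkle).1 (seq.hZ_pos k hkle).2
      have h2 : 0 ≤ chi D ZK (ZK - C (k + 1)) :=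
        hell1 _ (hDint (k + 1) (by omega)) (hDpos (k + 1) hk) (hDne (k + 1) hk)
      have h3 : chi D ZK (ZK - C k) =
          chi D ZK (seq.Z k) + chi D ZK (ZK - C (k + 1)) -
            D.B (seq.Z k) (ZK - C (k + 1)) := by
        rw [hdec]; exact chi_add D ZK _ _
      have hpair : 0 ≤ D.B (seq.Z k) (ZK - C (k + 1)) := by
        rw [hchiDk] at h3; linarith
      have hBk1 : seq.Bset (k + 1) = supp (ZK - C (k + 1)) :=
        hBsupp (k + 1) (Nat.succ_le_succ (Nat.zero_le k)) hk
      have hterms : ∀ u, (ZK - C (k + 1)) u * D.B (seq.Z k) (Ev u) ≤ 0 := by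
        intro u
        rcases eq_or_ne ((ZK - C (k + 1)) u) 0 with h | h
        · rw [h, zero_mul]
        · have hu : u ∈ seq.Bset (k + 1) := by rw [hBk1]; exact h
          have h4 : D.B (seq.Z k) (Ev u) ≤ 0 :=
            seq.hZ_anti k hkle u (seq.hmono k hkm hu)
          exact mul_nonpos_of_nonneg_of_nonpos (hDpos (k + 1) hk u) h4
      have hsum0 : ∑ u, (ZK - C (k + 1)) u * D.B (seq.Z k) (Ev u) = 0 := by
        have hle : ∑ u, (ZK - C (k + 1)) u * D.B (seq.Z k) (Ev u) ≤ 0 :=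
          Finset.sum_nonpos fun u _ => hterms u
        have hge : 0 ≤ ∑ u, (ZK - C (k + 1)) u * D.B (seq.Z k) (Ev u) := by
          rw [← B_exp_right]; exact hpair
        linarith
      have hzero := (Finset.sum_eq_zero_iff_of_nonpos
        (fun u _ => hterms u)).mp hsum0 v (Finset.mem_univ v)
      have hDv : (ZK - C (k + 1)) v ≠ 0 := by rw [hBk1] at hv; exact hv
      have hZkv : D.B (seq.Z k) (Ev v) = 0 :=
        (mul_eq_zero.mp hzero).resolve_left hDv
      have hvk : v ∈ seq.Bset k := seq.hmono k hkm hv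
      rw [hCsucc k, map_add, LinearMap.add_apply, ihk v hvk, hZkv, add_zero]
  have hDcan : ∀ j, j ≤ m → ∀ v ∈ seq.Bset j,
      D.B (ZK - C j) (Ev v) = D.B (Ev v) (Ev v) + 2 := by
    intro j hj v hv
    rw [map_sub, LinearMap.sub_apply, L1 j hj v hv, sub_zero, hZK v]
  -- choose the maximal i with supp Z ⊆ B_i
  have hA0 : supp Z ⊆ seq.Bset 0 := by rw [hB0]; exact Set.subset_univ _
  set S : Finset ℕ := (Finset.range (m + 1)).filter (fun j => supp Z ⊆ seq.Bset j)
    with hS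
  have hS0 : 0 ∈ S := by
    rw [hS, Finset.mem_filter, Finset.mem_range]
    exact ⟨by omega, hA0⟩
  have hSne : S.Nonempty := ⟨0, hS0⟩
  set i := S.max' hSne with hidef
  have hiS : i ∈ S := S.max'_mem hSne
  have him : i ≤ m := by
    have := (Finset.mem_filter.mp hiS).1
    have := Finset.mem_range.mp this
    omega
  have hAi : supp Z ⊆ seq.Bset i := (Finset.mem_filter.mp hiS).2
  have hmax : ∀ k, k ≤ m → supp Z ⊆ seq.Bset k → k ≤ i := by
    intro k hk h
    exact S.le_max' k (Finset.mem_filter.mpr ⟨Finset.mem_range.mpr (by omega), h⟩)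
  set W : V → ℚ := (ZK - C i) - Z with hWdef
  have hWA : ∀ v, Z v ≠ 0 → D.B W (Ev v) = 0 := by
    intro v hv
    have hvB : v ∈ seq.Bset i := hAi hv
    rw [hWdef, map_sub, LinearMap.sub_apply, hDcan i him v hvB, hcan v hv, sub_self]
  have hWpos : 0 ≤ W := by
    apply nonneg_of_orth D W
    intro v hv
    apply hWA v
    intro hz
    have h1 : W v = (ZK - C i) v := by rw [hWdef, Pi.sub_apply, hz, sub_zero]
    have h2 := hDpos i him v
    rw [h1] at hv
    simp only [Pi.zero_apply] at h2
    linarith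
  by_cases hW0 : W = 0
  · -- Z = ZK - C i
    have hZeq : Z = ZK - C i := by
      have h := sub_eq_zero.mp hW0
      exact h.symm
    refine ⟨i, him, ?_, ?_⟩
    · rcases Nat.eq_zero_or_pos i with h0 | h1
      · rw [h0, hB0]
        have hZZK : Z = ZK := by rw [hZeq, h0, hC0, sub_zero]
        apply Set.eq_univ_of_forall
        intro v
        have := suppZK_full D ZK hZK hmin hconn
          (by have := hDpos 0 (Nat.zero_le m); rwa [hC0, sub_zero] at this)
          (by have := hDne 0 (Nat.zero_le m); rwa [hC0, sub_zero] at this) v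
        rw [hZZK]
        exact this
      · rw [hZeq, hBsupp i h1 him]
    · rw [hs0, zero_add, hZeq, hCdef]
  · exfalso
    have hWsupp : supp W ⊆ seq.Bset i := by
      intro v hv
      have hv : W v ≠ 0 := hv
      by_cases hz : Z v = 0
      · have h1 : W v = (ZK - C i) v := by rw [hWdef, Pi.sub_apply, hz, sub_zero]
        apply hDsupp i him
        show (ZK - C i) v ≠ 0
        rw [← h1]; exact hv
      · exact hAi hz
    have hWanti : ∀ u ∈ seq.Bset i, D.B W (Ev u) ≤ 0 := by
      intro u hu
      by_cases hz : Z u = 0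
      · have h1 : D.B W (Ev u) = (D.B (Ev u) (Ev u) + 2) - D.B Z (Ev u) := by
          rw [hWdef, map_sub, LinearMap.sub_apply, hDcan i him u hu]
        have h2 : 0 ≤ D.B Z (Ev u) := B_nonneg_of_zero D Z hZ0 u hz
        have h3 := hmin u
        rw [h1]; linarith
      · rw [hWA u hz]
    have hWL : inL W := inL_sub (hDint i (by omega)) hZL
    have hZiW : seq.Z i ≤ W := seq.hZ_min i him W hWL hWpos hW0 hWsupp hWanti
    obtain ⟨v0, hv0⟩ := Function.ne_iff.mp hZne
    have hv0' : Z v0 ≠ 0 := by simpa using hv0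
    have hZv0 : 0 < Z v0 := lt_of_le_of_ne (hZ0 v0) (Ne.symm hv0')
    rcases eq_or_lt_of_le him with heq | hlt
    · -- i = m : then ZK - C m = Z m and W ≥ Z m forces Z ≤ 0
      have hDm : ZK - C m = seq.Z m := by
        rw [hD_Ico m (Nat.le_succ m)]
        rw [Finset.sum_Ico_eq_sum_range]
        simp
      have h1 : seq.Z i v0 ≤ W v0 := hZiW v0
      have h2 : W v0 = (ZK - C i) v0 - Z v0 := by rw [hWdef, Pi.sub_apply]
      rw [heq] at h1 h2
      have h3 : (ZK - C m) v0 = seq.Z m v0 := by rw [hDm]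
      rw [h2, h3] at h1
      linarith
    · -- i < m : then supp Z ⊆ B_{i+1}, contradicting maximality
      have hnext : supp Z ⊆ seq.Bset (i + 1) := by
        intro v hv
        have hv : Z v ≠ 0 := hv
        have hZv : 0 < Z v := lt_of_le_of_ne (hZ0 v) (Ne.symm hv)
        have h1 : seq.Z i v ≤ W v := hZiW v
        have h2 : W v = (ZK - C i) v - Z v := by rw [hWdef, Pi.sub_apply]
        have h3 : (ZK - C (i + 1)) v = (ZK - C i) v - seq.Z i v := by
          rw [hCsucc i]
          simp only [Pi.sub_apply, Pi.add_apply]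
          ring
        have h4 : 0 < (ZK - C (i + 1)) v := by rw [h3]; linarith
        rw [hBsupp (i + 1) (by omega) hlt]
        exact ne_of_gt h4
      have := hmax (i + 1) hlt hnext
      omega
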